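/- Let p be a prime and k a field of characteristic p containing F_p with a, b ∈ k nonzero, and r a positive integer coprime to p. Suppose Z^p − Z − a x^r and Z^p − Z − b x^r are irreducible over k(x). Then the field extensions of k(x) generated by a root of Z^p − Z − a x^r and by a root of Z^p − Z − b x^r are equal (inside a fixed algebraic closure) if and only if a/b ∈ F_p. -/

import Mathlib

open Polynomial

lemma AS_rewrite {F : Type*} [CommRing F] (p : ℕ) (u : F) :
    (X ^ p - X - C u : F[X]) = X ^ p - (X + C u) := by ring

lemma AS_deg_lt {F : Type*} [CommRing F] [Nontrivial F] {p : ℕ} (hp : 1 < p) (u : F) :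
    (X + C u : F[X]).degree < (p : ℕ) := by
  refine lt_of_le_of_lt (degree_add_le _ _) ?_
  rw [max_lt_iff]
  exact ⟨lt_of_le_of_lt degree_X_le (by exact_mod_cast hp),
    lt_of_le_of_lt degree_C_le (by exact_mod_cast Nat.lt_of_lt_of_le Nat.zero_lt_one hp.le)⟩

lemma AS_monic {F : Type*} [CommRing F] [Nontrivial F] {p : ℕ} (hp : 1 < p) (u : F) :
    (X ^ p - X - C u : F[X]).Monic := by
  rw [AS_rewrite]; exact monic_X_pow_sub (AS_deg_lt hp u)

lemma AS_degree {F : Type*} [CommRing F] [Nontrivial F] {p : ℕ} (hp : 1 < p) (u : F) :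
    (X ^ p - X - C u : F[X]).degree = (p : ℕ) := by
  rw [AS_rewrite, degree_sub_eq_left_of_degree_lt, degree_X_pow]
  rw [degree_X_pow]; exact AS_deg_lt hp u

lemma AS_natDegree {F : Type*} [CommRing F] [Nontrivial F] {p : ℕ} (hp : 1 < p) (u : F) :
    (X ^ p - X - C u : F[X]).natDegree = p :=
  natDegree_eq_of_degree_eq_some (AS_degree hp u)

theorem pth_root_mem {p : ℕ} (hp : p.Prime) {F : Type*} [Field F] [CharP F p]
    (x : F) (h : x ^ p = x) : ∃ c : ZMod p, x = ZMod.castHom (dvd_refl p) F c := by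
  haveI := Fact.mk hp
  classical
  set f : ZMod p →+* F := ZMod.castHom (dvd_refl p) F with hf
  have hfinj : Function.Injective f := f.injective
  set q : F[X] := X ^ p - X with hq
  have hq' : q = X ^ p - X - C 0 := by rw [hq, map_zero, sub_zero]
  have hqm : q.Monic := by rw [hq']; exact AS_monic hp.one_lt 0
  have hq0 : q ≠ 0 := hqm.ne_zero
  have hdeg : q.natDegree = p := by rw [hq']; exact AS_natDegree hp.one_lt 0
  have hsub : (Finset.univ.image f) ⊆ q.roots.toFinset := by
    intro y hy
    obtain ⟨c, _, rfl⟩ := Finset.mem_image.mp hy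
    rw [Multiset.mem_toFinset, mem_roots hq0]
    show eval (f c) q = 0
    rw [hq]
    simp [← map_pow, ZMod.pow_card]
  have hcard : q.roots.toFinset.card ≤ p := by
    calc q.roots.toFinset.card ≤ Multiset.card q.roots := Multiset.toFinset_card_le _
    _ ≤ q.natDegree := card_roots' q
    _ = p := hdeg
  have hcard2 : (Finset.univ.image f).card = p := by
    rw [Finset.card_image_of_injective _ hfinj, Finset.card_univ, ZMod.card]
  have heq := Finset.eq_of_subset_of_card_le hsub (by omega)
  have hx : x ∈ q.roots.toFinset := by
    rw [Multiset.mem_toFinset, mem_roots hq0]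
    show eval x q = 0
    rw [hq]; simp [h]
  rw [← heq] at hx
  obtain ⟨c, _, hc⟩ := Finset.mem_image.mp hx
  exact ⟨c, hc.symm⟩

lemma ratfunc_AS {p : ℕ} (hp : p.Prime) {k : Type*} [Field k] {r : ℕ} (hr : 0 < r)
    (hrp : Nat.Coprime r p) (d : k) (w : RatFunc k)
    (h : w ^ p - w = algebraMap k (RatFunc k) d * RatFunc.X ^ r) : d = 0 := by
  classical
  set g : k[X] := Polynomial.C d * Polynomial.X ^ r with hgdef
  have hg : algebraMap k[X] (RatFunc k) g = algebraMap k (RatFunc k) d * RatFunc.X ^ r := by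
    rw [hgdef, map_mul, map_pow, RatFunc.algebraMap_C, RatFunc.algebraMap_X,
      RatFunc.algebraMap_eq_C]
  have hint : IsIntegral k[X] w := by
    refine ⟨X ^ p - X - C g, AS_monic hp.one_lt g, ?_⟩
    have : (Polynomial.aeval w) (X ^ p - X - C g) = w ^ p - w - algebraMap k[X] (RatFunc k) g := by
      simp
    rw [← Polynomial.aeval_def, this, hg, h, sub_self]
  obtain ⟨f, hf⟩ := IsIntegrallyClosed.isIntegral_iff.mp hint
  have hinj : Function.Injective (algebraMap k[X] (RatFunc k)) := IsFractionRing.injective _ _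
  have key : f ^ p - f = g := by
    apply hinj
    rw [map_sub, map_pow, hf, hg, h]
  by_contra hd
  -- degree analysis
  rcases Nat.eq_zero_or_pos f.natDegree with h0 | hpos
  · obtain ⟨e, rfl⟩ : ∃ e, f = Polynomial.C e := ⟨f.coeff 0, (Polynomial.eq_C_of_natDegree_eq_zero h0)⟩
    have : (Polynomial.C (e ^ p - e) : k[X]).coeff r = g.coeff r := by
      rw [← key]; simp [map_pow]
    rw [Polynomial.coeff_C, if_neg hr.ne'] at this
    apply hd
    have : (0:k) = d := by simpa [hgdef, Polynomial.coeff_C_mul, Polynomial.coeff_X_pow] using this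
    exact this.symm
  · have h1 : (f ^ p).natDegree = p * f.natDegree := by
      rw [Polynomial.natDegree_pow]
    have h2 : f.natDegree < (f ^ p).natDegree := by
      rw [h1]; nlinarith [hp.one_lt]
    have h3 : (f ^ p - f).natDegree = p * f.natDegree := by
      rw [Polynomial.natDegree_sub_eq_left_of_natDegree_lt h2, h1]
    have h4 : g.natDegree = r := by
      rw [hgdef, Polynomial.natDegree_C_mul_X_pow _ _ hd]
    have h5 : r = p * f.natDegree := by rw [← h4, ← key, h3]
    have : p ∣ 1 := hrp ▸ Nat.dvd_gcd ⟨f.natDegree, h5⟩ dvd_rfl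
    exact hp.one_lt.ne' (Nat.dvd_one.mp this)

set_option maxHeartbeats 2000000 in
set_option synthInstance.maxHeartbeats 1000000 in
theorem stmt5 {p : ℕ} (hp : p.Prime) {k : Type} [Field k] [CharP k p]
    (a b : k) (ha : a ≠ 0) (hb : b ≠ 0) (r : ℕ) (hr : 0 < r) (hrp : Nat.Coprime r p)
    (hIa : Irreducible
      (X ^ p - X - C ((algebraMap k (RatFunc k)) a * RatFunc.X ^ r) : Polynomial (RatFunc k)))
    (hIb : Irreducible
      (X ^ p - X - C ((algebraMap k (RatFunc k)) b * RatFunc.X ^ r) : Polynomial (RatFunc k)))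
    (za zb : AlgebraicClosure (RatFunc k))
    (hza : Polynomial.aeval za
      (X ^ p - X - C ((algebraMap k (RatFunc k)) a * RatFunc.X ^ r) : Polynomial (RatFunc k)) = 0)
    (hzb : Polynomial.aeval zb
      (X ^ p - X - C ((algebraMap k (RatFunc k)) b * RatFunc.X ^ r) : Polynomial (RatFunc k)) = 0) :
    IntermediateField.adjoin (RatFunc k) {za} = IntermediateField.adjoin (RatFunc k) {zb} ↔
      ∃ c : ZMod p, a / b = ZMod.castHom (dvd_refl p) k c := by
  classical
  haveI := Fact.mk hp
  haveI hCK : CharP (RatFunc k) p := charP_of_injective_algebraMap (algebraMap k (RatFunc k)).injective p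
  haveI hCL : CharP (AlgebraicClosure (RatFunc k)) p := charP_of_injective_algebraMap (algebraMap (RatFunc k) (AlgebraicClosure (RatFunc k))).injective p
  set ua : (RatFunc k) := algebraMap k (RatFunc k) a * RatFunc.X ^ r with hua
  set ub : (RatFunc k) := algebraMap k (RatFunc k) b * RatFunc.X ^ r with hub
  have hza' : za ^ p - za = algebraMap (RatFunc k) (AlgebraicClosure (RatFunc k)) ua := by
    have h := hza
    rw [map_sub, map_sub, map_pow, aeval_X, aeval_C, sub_sub, sub_eq_zero] at h
    rw [h]; ring
  have hzb' : zb ^ p - zb = algebraMap (RatFunc k) (AlgebraicClosure (RatFunc k)) ub := by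
    have h := hzb
    rw [map_sub, map_sub, map_pow, aeval_X, aeval_C, sub_sub, sub_eq_zero] at h
    rw [h]; ring
  constructor
  · -- forward direction
    intro heq
    have hzaint : IsIntegral (RatFunc k) za :=
      ⟨X ^ p - X - C ua, AS_monic hp.one_lt ua, by rw [← aeval_def]; exact hza⟩
    have hmin : minpoly (RatFunc k) za = X ^ p - X - C ua :=
      (minpoly.eq_of_irreducible_of_monic hIa hza (AS_monic hp.one_lt ua)).symm
    haveI : FiniteDimensional (RatFunc k) (IntermediateField.adjoin (RatFunc k) {za}) :=
      IntermediateField.adjoin.finiteDimensional hzaint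
    set E := IntermediateField.adjoin (RatFunc k) {za} with hE
    haveI hCE : CharP E p := charP_of_injective_algebraMap (algebraMap (RatFunc k) E).injective p
    have hrank : Module.finrank (RatFunc k) E = p := by
      rw [hE, IntermediateField.adjoin.finrank hzaint, hmin, AS_natDegree hp.one_lt]
    set x : E := IntermediateField.AdjoinSimple.gen (RatFunc k) za with hx
    have hxL : algebraMap E (AlgebraicClosure (RatFunc k)) x = za := rfl
    have hzbE : zb ∈ E := heq ▸ IntermediateField.subset_adjoin (RatFunc k) {zb} rfl
    set y : E := ⟨zb, hzbE⟩ with hy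
    have hyL : algebraMap E (AlgebraicClosure (RatFunc k)) y = zb := rfl
    have hpush : ∀ (u : (RatFunc k)) (e : E), algebraMap E (AlgebraicClosure (RatFunc k)) e = algebraMap (RatFunc k) (AlgebraicClosure (RatFunc k)) u → e = algebraMap (RatFunc k) E u := by
      intro u e he
      apply (algebraMap E (AlgebraicClosure (RatFunc k))).injective
      rw [he, ← IsScalarTower.algebraMap_apply]
    have hxE : x ^ p - x = algebraMap (RatFunc k) E ua := by
      apply hpush
      rw [map_sub, map_pow, hxL, hza']
    have hyE : y ^ p - y = algebraMap (RatFunc k) E ub := by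
      apply hpush
      rw [map_sub, map_pow, hyL, hzb']
    -- the automorphism sending x to x + 1
    have hroot1 : aeval (x + 1) (minpoly (RatFunc k) za) = 0 := by
      rw [hmin, map_sub, map_sub, map_pow, aeval_X, aeval_C, add_pow_char, one_pow]
      linear_combination hxE
    set σ : E →ₐ[(RatFunc k)] E :=
      (AdjoinRoot.liftAlgHom (minpoly (RatFunc k) za) (Algebra.ofId (RatFunc k) E) (x + 1) hroot1).comp
        (IntermediateField.adjoinRootEquivAdjoin (RatFunc k) hzaint).symm.toAlgHom with hσ
    have hσx : σ x = x + 1 := by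
      rw [hσ]
      simp only [AlgHom.coe_comp, Function.comp_apply, AlgEquiv.toAlgHom_eq_coe,
        AlgHom.coe_coe]
      have h1 : (IntermediateField.adjoinRootEquivAdjoin (RatFunc k) hzaint).symm x =
          AdjoinRoot.root (minpoly (RatFunc k) za) :=
        IntermediateField.adjoinRootEquivAdjoin_symm_apply_gen (RatFunc k) hzaint
      erw [h1, AdjoinRoot.liftAlgHom_root]
    haveI : Algebra.IsAlgebraic (RatFunc k) E := Algebra.IsAlgebraic.of_finite (RatFunc k) E
    set σ' : E ≃ₐ[(RatFunc k)] E := AlgEquiv.ofBijective σ (Algebra.IsAlgebraic.algHom_bijective σ)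
      with hσ'
    have hσ'x : σ' x = x + 1 := hσx
    have hpowx : ∀ n : ℕ, (σ' ^ n) x = x + n := by
      intro n
      induction n with
      | zero => simp
      | succ n ih =>
        rw [pow_succ', AlgEquiv.mul_apply, ih, map_add, hσ'x, map_natCast]
        push_cast; ring
    have hσ'p : σ' ^ p = 1 := by
      have hext : (σ' ^ p).toAlgHom = (1 : E ≃ₐ[(RatFunc k)] E).toAlgHom := by
        apply IntermediateField.adjoin_algHom_ext
        intro z hz
        rcases hz with rfl
        show (σ' ^ p) x = (1 : E ≃ₐ[(RatFunc k)] E) x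
        rw [hpowx p, CharP.cast_eq_zero E p, add_zero]
        rfl
      exact AlgEquiv.ext fun z => DFunLike.congr_fun hext z
    have hσ'ne : σ' ≠ 1 := by
      intro hcon
      have h1 : x + 1 = x := by rw [← hσ'x, hcon]; rfl
      exact one_ne_zero (left_eq_add.mp h1.symm)
    have hord : orderOf σ' = p := by
      rcases hp.eq_one_or_self_of_dvd _ (orderOf_dvd_of_pow_eq_one hσ'p) with h1 | h1
      · exact absurd (orderOf_eq_one_iff.mp h1) hσ'ne
      · exact h1
    -- c
    have hσ'yE : (σ' y) ^ p - σ' y = algebraMap (RatFunc k) E ub := by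
      rw [← map_pow, ← map_sub, hyE, AlgEquiv.commutes]
    have hcp : (σ' y - y) ^ p = σ' y - y := by
      rw [sub_pow_char]
      linear_combination hσ'yE - hyE
    obtain ⟨c0, hc0⟩ := pth_root_mem hp (σ' y - y) hcp
    set cE : E := ZMod.castHom (dvd_refl p) E c0 with hcE
    set cK : (RatFunc k) := ZMod.castHom (dvd_refl p) (RatFunc k) c0 with hcK
    have hcKE : algebraMap (RatFunc k) E cK = cE :=
      RingHom.congr_fun
        (RingHom.ext_zmod ((algebraMap (RatFunc k) E).comp (ZMod.castHom (dvd_refl p) (RatFunc k)))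
          (ZMod.castHom (dvd_refl p) E)) c0
    have hcEp : cE ^ p = cE := by
      rw [hcE, ← map_pow, ZMod.pow_card]
    set w : E := y - cE * x with hw
    have hσ'y : σ' y = y + cE := by rw [← hc0]; ring
    have hσ'c : σ' cE = cE := by rw [← hcKE, AlgEquiv.commutes]
    have hσ'w : σ' w = w := by
      rw [hw, map_sub, map_mul, hσ'y, hσ'c, hσ'x]; ring
    -- fixed field argument
    have hstab : (Subgroup.zpowers σ') ≤ MulAction.stabilizer (E ≃ₐ[(RatFunc k)] E) w :=
      Subgroup.zpowers_le.mpr (by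
        rw [MulAction.mem_stabilizer_iff]
        exact hσ'w)
    have hwfix : w ∈ IntermediateField.fixedField (Subgroup.zpowers σ') := by
      intro g
      exact hstab g.2
    have hcard : Fintype.card (Subgroup.zpowers σ') = p := by
      rw [Fintype.card_zpowers, hord]
    have hfr : Module.finrank (↥(IntermediateField.fixedField (Subgroup.zpowers σ'))) (↥E) = p := by
      rw [IntermediateField.finrank_fixedField_eq_card, Nat.card_eq_fintype_card, hcard]
    have h1 : Module.finrank (RatFunc k) (↥(IntermediateField.fixedField (Subgroup.zpowers σ'))) = 1 := by
      have htow := Module.finrank_mul_finrank (RatFunc k) (↥(IntermediateField.fixedField (Subgroup.zpowers σ'))) (↥E)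
      rw [hfr, hrank] at htow
      exact Nat.eq_of_mul_eq_mul_right hp.pos (by rw [htow, one_mul])
    have hbot : IntermediateField.fixedField (Subgroup.zpowers σ') = ⊥ :=
      IntermediateField.finrank_eq_one_iff.mp h1
    obtain ⟨w0, hw0⟩ : w ∈ Set.range (algebraMap (RatFunc k) (↥E)) :=
      IntermediateField.mem_bot.mp (hbot ▸ hwfix)
    -- main equation
    have hyw : y = cE * x + w := by rw [hw]; ring
    have hEeq : algebraMap (RatFunc k) (↥E) ub = cE * algebraMap (RatFunc k) (↥E) ua + (w ^ p - w) := by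
      have hyp : y ^ p = (cE * x) ^ p + w ^ p := by rw [hyw, add_pow_char]
      have : algebraMap (RatFunc k) (↥E) ub = cE ^ p * x ^ p + w ^ p - (cE * x + w) := by
        rw [← hyE, hyp, mul_pow, hyw]
      rw [this, hcEp, ← hxE]; ring
    have hKeq : w0 ^ p - w0 = ub - cK * ua := by
      apply (algebraMap (RatFunc k) (↥E)).injective
      have hm1 : algebraMap (RatFunc k) (↥E) (w0 ^ p - w0) = w ^ p - w := by
        rw [map_sub, map_pow, hw0]
      have hm2 : algebraMap (RatFunc k) (↥E) (ub - cK * ua)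
          = algebraMap (RatFunc k) (↥E) ub - cE * algebraMap (RatFunc k) (↥E) ua := by
        rw [map_sub (algebraMap (RatFunc k) (↥E)) ub (cK * ua),
          map_mul (algebraMap (RatFunc k) (↥E)) cK ua, hcKE]
      rw [hm1, hm2, hEeq]; ring
    set ck : k := ZMod.castHom (dvd_refl p) k c0 with hck
    have hckK : algebraMap k (RatFunc k) ck = cK :=
      RingHom.congr_fun
        (RingHom.ext_zmod ((algebraMap k (RatFunc k)).comp (ZMod.castHom (dvd_refl p) k))
          (ZMod.castHom (dvd_refl p) (RatFunc k))) c0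
    have hfin : w0 ^ p - w0 = algebraMap k (RatFunc k) (b - ck * a) * RatFunc.X ^ r := by
      rw [hKeq, map_sub (algebraMap k (RatFunc k)) b (ck * a),
        map_mul (algebraMap k (RatFunc k)) ck a, hckK, hua, hub]; ring
    have hba : b - ck * a = 0 := ratfunc_AS hp hr hrp _ _ hfin
    have hbeq : b = ck * a := sub_eq_zero.mp hba
    have hck0 : ck ≠ 0 := by
      intro h0
      exact hb (by rw [hbeq, h0, zero_mul])
    refine ⟨c0⁻¹, ?_⟩
    rw [hbeq, map_inv₀]
    rw [← hck]
    field_simp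
  · -- reverse direction
    rintro ⟨c, hc⟩
    have hcka : a = ZMod.castHom (dvd_refl p) k c * b := by
      rw [← hc]; field_simp
    set cL : (AlgebraicClosure (RatFunc k)) := ZMod.castHom (dvd_refl p) (AlgebraicClosure (RatFunc k)) c with hcL
    have hcomm : ∀ (t : k), algebraMap k (AlgebraicClosure (RatFunc k)) (ZMod.castHom (dvd_refl p) k c) = cL := by
      intro t
      exact RingHom.congr_fun
        (RingHom.ext_zmod ((algebraMap k (AlgebraicClosure (RatFunc k))).comp (ZMod.castHom (dvd_refl p) k))
          (ZMod.castHom (dvd_refl p) (AlgebraicClosure (RatFunc k)))) c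
    have hcLp : cL ^ p = cL := by rw [hcL, ← map_pow, ZMod.pow_card]
    have hcL0 : cL ≠ 0 := by
      intro h0
      have : (ZMod.castHom (dvd_refl p) (AlgebraicClosure (RatFunc k))) c = (ZMod.castHom (dvd_refl p) (AlgebraicClosure (RatFunc k))) 0 := by
        rw [← hcL, h0, map_zero]
      have hc0 : c = 0 := (ZMod.castHom (dvd_refl p) (AlgebraicClosure (RatFunc k))).injective this
      rw [hc0, map_zero] at hc
      exact ha (by rwa [_root_.div_eq_zero_iff, or_iff_left hb] at hc)
    -- e := za - cL * zb satisfies e^p = e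
    have htower : algebraMap (RatFunc k) (AlgebraicClosure (RatFunc k)) (algebraMap k (RatFunc k) b) = algebraMap k (AlgebraicClosure (RatFunc k)) b :=
      (IsScalarTower.algebraMap_apply k (RatFunc k) (AlgebraicClosure (RatFunc k)) b).symm
    have htowera : algebraMap (RatFunc k) (AlgebraicClosure (RatFunc k)) (algebraMap k (RatFunc k) a) = algebraMap k (AlgebraicClosure (RatFunc k)) a :=
      (IsScalarTower.algebraMap_apply k (RatFunc k) (AlgebraicClosure (RatFunc k)) a).symm
    have hXr : algebraMap (RatFunc k) (AlgebraicClosure (RatFunc k)) ua = cL * algebraMap (RatFunc k) (AlgebraicClosure (RatFunc k)) ub := by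
      rw [hua, hub, map_mul, map_mul, htowera, htower, hcka, map_mul, hcomm a]
      ring
    have hep : (za - cL * zb) ^ p = za - cL * zb := by
      rw [sub_pow_char, mul_pow, hcLp]
      have h1 : za ^ p = za + algebraMap (RatFunc k) (AlgebraicClosure (RatFunc k)) ua := by linear_combination hza'
      have h2 : zb ^ p = zb + algebraMap (RatFunc k) (AlgebraicClosure (RatFunc k)) ub := by linear_combination hzb'
      rw [h1, h2, hXr]; ring
    obtain ⟨d, hd⟩ := pth_root_mem hp (za - cL * zb) hep
    set dL : (AlgebraicClosure (RatFunc k)) := ZMod.castHom (dvd_refl p) (AlgebraicClosure (RatFunc k)) d with hdL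
    have hza_eq : za = cL * zb + dL := by rw [← hd]; ring
    -- memberships
    have hcmem : ∀ (T : IntermediateField (RatFunc k) (AlgebraicClosure (RatFunc k))), cL ∈ T := by
      intro T
      have : cL = algebraMap (RatFunc k) (AlgebraicClosure (RatFunc k)) (ZMod.castHom (dvd_refl p) (RatFunc k) c) :=
        (RingHom.congr_fun
          (RingHom.ext_zmod ((algebraMap (RatFunc k) (AlgebraicClosure (RatFunc k))).comp (ZMod.castHom (dvd_refl p) (RatFunc k)))
            (ZMod.castHom (dvd_refl p) (AlgebraicClosure (RatFunc k)))) c).symm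
      rw [this]
      exact T.algebraMap_mem _
    have hdmem : ∀ (T : IntermediateField (RatFunc k) (AlgebraicClosure (RatFunc k))), dL ∈ T := by
      intro T
      have : dL = algebraMap (RatFunc k) (AlgebraicClosure (RatFunc k)) (ZMod.castHom (dvd_refl p) (RatFunc k) d) :=
        (RingHom.congr_fun
          (RingHom.ext_zmod ((algebraMap (RatFunc k) (AlgebraicClosure (RatFunc k))).comp (ZMod.castHom (dvd_refl p) (RatFunc k)))
            (ZMod.castHom (dvd_refl p) (AlgebraicClosure (RatFunc k)))) d).symm
      rw [this]
      exact T.algebraMap_mem _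
    apply le_antisymm
    · rw [IntermediateField.adjoin_le_iff]
      intro z hz
      rw [Set.mem_singleton_iff] at hz
      rw [hz, hza_eq]
      exact add_mem (mul_mem (hcmem _) (IntermediateField.subset_adjoin (RatFunc k) {zb} rfl)) (hdmem _)
    · rw [IntermediateField.adjoin_le_iff]
      intro z hz
      rw [Set.mem_singleton_iff] at hz
      rw [hz]
      have hzb_eq : zb = cL⁻¹ * (za - dL) := by
        field_simp
        linear_combination -hza_eq
      rw [hzb_eq]
      exact mul_mem (inv_mem (hcmem _)) (sub_mem (IntermediateField.subset_adjoin (RatFunc k) {za} rfl) (hdmem _))
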